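/- arXiv:0910.2316 — 3 statements merged into one kernel-verified Lean document; each statement's English description precedes it below -/
import Mathlib

section
/- Let Σ be a simplicial fan in a lattice N. The deformed group ring Z[N]^Σ, the free abelian group on symbols y^v for v ∈ |Σ| ∩ N with product y^u · y^v = y^{u+v} if u and v lie in a common cone of Σ and 0 otherwise, is a well-defined associative commutative ring. -/
/-- Multiplication of a commutative ring structure, made explicit. -/
def ringMul {T : Type*} (R : CommRing T) (a b : T) : T := by letI := R; exact a * b

/-- Addition of a commutative ring structure, made explicit. -/
def ringAdd {T : Type*} (R : CommRing T) (a b : T) : T := by letI := R; exact a + b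

namespace Stmt9Aux
open scoped Classical

variable {d : ℕ} {L : AddSubgroup (Fin d → ℝ)} {Sigma : Finset (Set (Fin d → ℝ))}

abbrev S (L : AddSubgroup (Fin d → ℝ)) (Sigma : Finset (Set (Fin d → ℝ))) :=
  {v : Fin d → ℝ // (∃ σ ∈ Sigma, v ∈ σ) ∧ v ∈ L}

abbrev F (L : AddSubgroup (Fin d → ℝ)) (Sigma : Finset (Set (Fin d → ℝ))) := S L Sigma →₀ ℤ

variable (hadd : ∀ σ ∈ Sigma, ∀ x ∈ σ, ∀ y ∈ σ, x + y ∈ σ)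

noncomputable def mS (u v : S L Sigma) : F L Sigma :=
  if h : ∃ σ ∈ Sigma, (u : Fin d → ℝ) ∈ σ ∧ (v : Fin d → ℝ) ∈ σ then
    Finsupp.single ⟨(u : Fin d → ℝ) + v,
      ⟨by obtain ⟨σ, hσ, hu, hv⟩ := h; exact ⟨σ, hσ, hadd σ hσ _ hu _ hv⟩,
        add_mem u.2.2 v.2.2⟩⟩ 1
  else 0

noncomputable def M : F L Sigma →ₗ[ℤ] F L Sigma →ₗ[ℤ] F L Sigma :=
  Finsupp.lsum ℤ fun u => LinearMap.toSpanSingleton ℤ _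
    (Finsupp.lsum ℤ fun v => LinearMap.toSpanSingleton ℤ _ (mS hadd u v))

lemma M_single_single (u v : S L Sigma) (c c' : ℤ) :
    M hadd (Finsupp.single u c) (Finsupp.single v c') = (c * c') • mS hadd u v := by
  simp [M, LinearMap.toSpanSingleton_apply, smul_smul, mul_comm]

lemma mS_comm (u v : S L Sigma) : mS hadd u v = mS hadd v u := by
  unfold mS
  have h : (∃ σ ∈ Sigma, (u : Fin d → ℝ) ∈ σ ∧ (v : Fin d → ℝ) ∈ σ) ↔
      (∃ σ ∈ Sigma, (v : Fin d → ℝ) ∈ σ ∧ (u : Fin d → ℝ) ∈ σ) := by tauto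
  split_ifs with h1 h2 h2
  · exact congrArg (Finsupp.single · 1) (Subtype.ext (add_comm _ _))
  · exact absurd (h.mp h1) h2
  · exact absurd (h.mpr h2) h1
  · rfl

end Stmt9Aux

namespace Stmt9Aux2
open Stmt9Aux
variable {d : ℕ} {L : AddSubgroup (Fin d → ℝ)} {Sigma : Finset (Set (Fin d → ℝ))}
variable (hadd : ∀ σ ∈ Sigma, ∀ x ∈ σ, ∀ y ∈ σ, x + y ∈ σ)
variable (hface : ∀ σ ∈ Sigma, ∀ τ ∈ Sigma, ∀ x ∈ σ, ∀ y ∈ σ, x + y ∈ τ → x ∈ τ ∧ y ∈ τ)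

include hadd hface

lemma cond_iff (u v w : S L Sigma) :
    ((∃ σ ∈ Sigma, (u : Fin d → ℝ) ∈ σ ∧ (v : Fin d → ℝ) ∈ σ) ∧
        (∃ τ ∈ Sigma, ((u : Fin d → ℝ) + v) ∈ τ ∧ (w : Fin d → ℝ) ∈ τ))
    ↔ ((∃ σ ∈ Sigma, (v : Fin d → ℝ) ∈ σ ∧ (w : Fin d → ℝ) ∈ σ) ∧
        (∃ τ ∈ Sigma, (u : Fin d → ℝ) ∈ τ ∧ ((v : Fin d → ℝ) + w) ∈ τ)) := by
  constructor
  · rintro ⟨⟨σ, hσ, hu, hv⟩, ⟨τ, hτ, huv, hw⟩⟩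
    obtain ⟨huτ, hvτ⟩ := hface σ hσ τ hτ _ hu _ hv huv
    exact ⟨⟨τ, hτ, hvτ, hw⟩, ⟨τ, hτ, huτ, hadd τ hτ _ hvτ _ hw⟩⟩
  · rintro ⟨⟨σ, hσ, hv, hw⟩, ⟨τ, hτ, hu, hvw⟩⟩
    obtain ⟨hvτ, hwτ⟩ := hface σ hσ τ hτ _ hv _ hw hvw
    exact ⟨⟨τ, hτ, hu, hvτ⟩, ⟨τ, hτ, hadd τ hτ _ hu _ hvτ, hwτ⟩⟩

lemma key (u v w : S L Sigma) :
    M hadd (mS hadd u v) (Finsupp.single w 1)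
      = M hadd (Finsupp.single u 1) (mS hadd v w) := by
  have hiff := cond_iff hadd hface u v w
  rw [mS, mS]
  split_ifs with h1 h3 h3
  · rw [M_single_single, M_single_single]
    simp only [one_mul, one_smul]
    rw [mS, mS]
    split_ifs with c2 c4 c4
    · exact congrArg (Finsupp.single · 1) (Subtype.ext (add_assoc _ _ _))
    · exact absurd (hiff.mp ⟨h1, c2⟩).2 c4
    · exact absurd (hiff.mpr ⟨h3, c4⟩).2 c2
    · rfl
  · rw [M_single_single, map_zero]
    simp only [one_mul, one_smul]
    rw [mS, dif_neg]
    intro c2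
    exact h3 (hiff.mp ⟨h1, c2⟩).1
  · rw [M_single_single, map_zero, LinearMap.zero_apply]
    simp only [one_mul, one_smul]
    rw [mS, dif_neg]
    intro c4
    exact h1 (hiff.mpr ⟨h3, c4⟩).1
  · rw [map_zero, map_zero, LinearMap.zero_apply]

omit hface in
lemma M_comm (f g : F L Sigma) : M hadd f g = M hadd g f := by
  induction f using Finsupp.induction_linear with
  | zero => simp
  | add f f' hf hf' => simp [map_add, LinearMap.add_apply, hf, hf']
  | single a b =>
    induction g using Finsupp.induction_linear with
    | zero => simp
    | add g g' hg hg' => simp [map_add, LinearMap.add_apply, hg, hg']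
    | single a' b' => rw [M_single_single, M_single_single, mS_comm, mul_comm]

lemma M_assoc (f g h : F L Sigma) :
    M hadd (M hadd f g) h = M hadd f (M hadd g h) := by
  induction f using Finsupp.induction_linear with
  | zero => simp
  | add f f' hf hf' => simp [map_add, LinearMap.add_apply, hf, hf']
  | single a b =>
    induction g using Finsupp.induction_linear with
    | zero => simp
    | add g g' hg hg' => simp [map_add, LinearMap.add_apply, hg, hg']
    | single a' b' =>
      induction h using Finsupp.induction_linear with
      | zero => simp
      | add h h' hh hh' => simp [map_add, LinearMap.add_apply, hh, hh']
      | single a'' b'' =>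
        have e1 : (Finsupp.single a'' b'' : F L Sigma) = b'' • Finsupp.single a'' 1 := by
          rw [Finsupp.smul_single', mul_one]
        have e2 : (Finsupp.single a b : F L Sigma) = b • Finsupp.single a 1 := by
          rw [Finsupp.smul_single', mul_one]
        rw [M_single_single, M_single_single]
        rw [e1, e2]
        simp only [map_smul, LinearMap.smul_apply, smul_smul]
        rw [key hadd hface]
        ring_nf

omit hface in
lemma M_one (h0 : ∀ σ ∈ Sigma, (0 : Fin d → ℝ) ∈ σ) (e : S L Sigma)
    (he : (e : Fin d → ℝ) = 0) (f : F L Sigma) :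
    M hadd (Finsupp.single e 1) f = f := by
  induction f using Finsupp.induction_linear with
  | zero => simp
  | add f f' hf hf' => simp [map_add, hf, hf']
  | single v c =>
    rw [M_single_single, one_mul, mS]
    rw [dif_pos]
    · rw [Finsupp.smul_single', mul_one]
      congr 1
      apply Subtype.ext
      show (e : Fin d → ℝ) + ↑v = ↑v
      rw [he, zero_add]
    · obtain ⟨σ, hσ, hv⟩ := v.2.1
      exact ⟨σ, hσ, by rw [he]; exact h0 σ hσ, hv⟩

end Stmt9Aux2


open Stmt9Aux Stmt9Aux2 in
/-- let `Σ` be a (simplicial) fan in a lattice `L ⊆ ℝ^d`: a finite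
collection of strongly convex cones, any two of which meet along a common face (encoded
by the property `hface`: if a sum of two elements of a cone lies in another cone of the
fan, then both summands do).  Then the deformed group ring `ℤ[N]^Σ` — the free abelian
group on symbols `y^v`, `v ∈ |Σ| ∩ L`, with product `y^u · y^v = y^{u+v}` if `u, v` lie
in a common cone and `0` otherwise — is a well-defined associative commutative ring. -/
theorem stmt9 (d : ℕ) (L : AddSubgroup (Fin d → ℝ)) (Sigma : Finset (Set (Fin d → ℝ)))
    (h0 : ∀ σ ∈ Sigma, (0 : Fin d → ℝ) ∈ σ)
    (hadd : ∀ σ ∈ Sigma, ∀ x ∈ σ, ∀ y ∈ σ, x + y ∈ σ)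
    (hconv : ∀ σ ∈ Sigma, ∀ x ∈ σ, -x ∈ σ → x = 0)
    (hface : ∀ σ ∈ Sigma, ∀ τ ∈ Sigma, ∀ x ∈ σ, ∀ y ∈ σ, x + y ∈ τ → x ∈ τ ∧ y ∈ τ) :
    ∃ R : CommRing ({v : Fin d → ℝ // (∃ σ ∈ Sigma, v ∈ σ) ∧ v ∈ L} →₀ ℤ),
      (∀ a b, ringAdd R a b = a + b) ∧
      (∀ u v : {v : Fin d → ℝ // (∃ σ ∈ Sigma, v ∈ σ) ∧ v ∈ L},
        (∀ _h : ∃ σ ∈ Sigma, (u : Fin d → ℝ) ∈ σ ∧ (v : Fin d → ℝ) ∈ σ,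
          ∀ huv : (∃ σ ∈ Sigma, (u : Fin d → ℝ) + v ∈ σ) ∧ (u : Fin d → ℝ) + v ∈ L,
            ringMul R (Finsupp.single u 1) (Finsupp.single v 1)
              = Finsupp.single ⟨(u : Fin d → ℝ) + v, huv⟩ 1) ∧
        ((¬ ∃ σ ∈ Sigma, (u : Fin d → ℝ) ∈ σ ∧ (v : Fin d → ℝ) ∈ σ) →
          ringMul R (Finsupp.single u 1) (Finsupp.single v 1) = 0)) := by

  by_cases hne : ∃ σ, σ ∈ Sigma
  · obtain ⟨σ₀, hσ₀⟩ := hne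
    set e : S L Sigma := ⟨0, ⟨σ₀, hσ₀, h0 σ₀ hσ₀⟩, L.zero_mem⟩ with he
    let R : CommRing (F L Sigma) := { (inferInstance : AddCommGroup (F L Sigma)) with
      mul := fun f g => M hadd f g
      one := Finsupp.single e 1
      left_distrib := fun a b c => map_add (M hadd a) b c
      right_distrib := fun a b c => by
        show M hadd (a + b) c = M hadd a c + M hadd b c
        rw [map_add]; rfl
      zero_mul := fun a => by
        show M hadd 0 a = 0
        rw [map_zero]; rfl
      mul_zero := fun a => map_zero (M hadd a)
      mul_assoc := M_assoc hadd hface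
      one_mul := M_one hadd h0 e rfl
      mul_one := fun f => by
        show M hadd f (Finsupp.single e 1) = f
        rw [M_comm]; exact M_one hadd h0 e rfl f
      mul_comm := M_comm hadd }
    refine ⟨R, fun a b => rfl, fun u v => ?_⟩
    have hmul : ∀ a b : F L Sigma, ringMul R a b = M hadd a b := fun a b => rfl
    constructor
    · intro h huv
      rw [hmul, M_single_single, mS, dif_pos h]
      simp
    · intro h
      rw [hmul, M_single_single, mS, dif_neg h]
      simp
  · haveI : Subsingleton (F L Sigma) := ⟨fun f g => Finsupp.ext fun a => by
      obtain ⟨σ, hσ, -⟩ := a.2.1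
      exact absurd ⟨σ, hσ⟩ hne⟩
    refine ⟨{ (inferInstance : AddCommGroup (F L Sigma)) with
      mul := fun _ _ => 0
      one := 0
      left_distrib := fun _ _ _ => Subsingleton.elim _ _
      right_distrib := fun _ _ _ => Subsingleton.elim _ _
      zero_mul := fun _ => Subsingleton.elim _ _
      mul_zero := fun _ => Subsingleton.elim _ _
      mul_assoc := fun _ _ _ => Subsingleton.elim _ _
      one_mul := fun _ => Subsingleton.elim _ _
      mul_one := fun _ => Subsingleton.elim _ _
      mul_comm := fun _ _ => Subsingleton.elim _ _ },
      fun a b => rfl, fun u v =>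
        ⟨fun _ _ => Subsingleton.elim _ _, fun _ => Subsingleton.elim _ _⟩⟩
end

section
/- Let Σ be a smooth fan in a lattice N, with primitive ray generators v_1,...,v_r. The map sending the monomial x_{i_1}^{a_1} ⋯ x_{i_d}^{a_d} to y^{a_1 v_{i_1} + ⋯ + a_d v_{i_d}} induces a ring isomorphism from the Stanley–Reisner ring SR(Σ) = Z[x_1,...,x_r]/(x_{i_1}⋯x_{i_s} : v_{i_1},...,v_{i_s} do not span a cone of Σ) onto the deformed group ring Z[N]^Σ. In particular SR(Σ) has a Z-basis indexed by the lattice points of |Σ| ∩ N. -/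
open MvPolynomial

/-- let `Σ` be a smooth fan in a lattice `L ⊆ ℝ^d`, with primitive ray
generators `v_1, …, v_r` (smoothness is encoded by `hsmooth`: every lattice point of
`|Σ| ∩ L` is uniquely a nonnegative integer combination of the ray generators lying in a
cone containing it).  Let `D` be the deformed group ring `ℤ[N]^Σ`, presented by a
`ℤ`-basis `b` indexed by `|Σ| ∩ L` with `b_u · b_v = b_{u+v}` if `u, v` lie in a common
cone of `Σ` and `0` otherwise.  Then the map `x_{i} ↦ y^{v_i}` induces a ring
isomorphism from the Stanley–Reisner ring
`SR(Σ) = ℤ[x_1,…,x_r]/(x_{i_1}⋯x_{i_s} : v_{i_1},…,v_{i_s} do not span a cone of Σ)`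
onto `ℤ[N]^Σ`; in particular `SR(Σ)` has a `ℤ`-basis indexed by the lattice points of
`|Σ| ∩ L`. -/
theorem stmt10 (d r : ℕ) (L : AddSubgroup (Fin d → ℝ))
    (Sigma : Finset (Set (Fin d → ℝ)))
    (h0 : ∀ σ ∈ Sigma, (0 : Fin d → ℝ) ∈ σ)
    (hadd : ∀ σ ∈ Sigma, ∀ x ∈ σ, ∀ y ∈ σ, x + y ∈ σ)
    (hconv : ∀ σ ∈ Sigma, ∀ x ∈ σ, -x ∈ σ → x = 0)
    (hface : ∀ σ ∈ Sigma, ∀ τ ∈ Sigma, ∀ x ∈ σ, ∀ y ∈ σ, x + y ∈ τ → x ∈ τ ∧ y ∈ τ)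
    (v : Fin r → (Fin d → ℝ))
    (hrays : ∀ i, (∃ σ ∈ Sigma, v i ∈ σ) ∧ v i ∈ L)
    (hsmooth : ∀ w : Fin d → ℝ, ((∃ σ ∈ Sigma, w ∈ σ) ∧ w ∈ L) →
      ∃! a : Fin r → ℕ,
        (∃ σ ∈ Sigma, w ∈ σ ∧ ∀ i, a i ≠ 0 → v i ∈ σ) ∧
        w = ∑ i, (a i : ℝ) • v i)
    (D : Type*) [CommRing D]
    (b : Module.Basis {w : Fin d → ℝ // (∃ σ ∈ Sigma, w ∈ σ) ∧ w ∈ L} ℤ D)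
    (hb : ∀ u w : {w : Fin d → ℝ // (∃ σ ∈ Sigma, w ∈ σ) ∧ w ∈ L},
      (∀ _h : ∃ σ ∈ Sigma, (u : Fin d → ℝ) ∈ σ ∧ (w : Fin d → ℝ) ∈ σ,
        ∀ huw : (∃ σ ∈ Sigma, (u : Fin d → ℝ) + w ∈ σ) ∧ (u : Fin d → ℝ) + w ∈ L,
          b u * b w = b ⟨(u : Fin d → ℝ) + w, huw⟩) ∧
      ((¬ ∃ σ ∈ Sigma, (u : Fin d → ℝ) ∈ σ ∧ (w : Fin d → ℝ) ∈ σ) → b u * b w = 0)) :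
    (∃ e : (MvPolynomial (Fin r) ℤ ⧸
        Ideal.span { f : MvPolynomial (Fin r) ℤ | ∃ s : Finset (Fin r),
          (¬ ∃ σ ∈ Sigma, ∀ i ∈ s, v i ∈ σ) ∧ f = ∏ i ∈ s, X i }) ≃+* D,
      ∀ i, e (Ideal.Quotient.mk _ (X i)) = b ⟨v i, hrays i⟩) ∧
    Nonempty (Module.Basis {w : Fin d → ℝ // (∃ σ ∈ Sigma, w ∈ σ) ∧ w ∈ L} ℤ
      (MvPolynomial (Fin r) ℤ ⧸
        Ideal.span { f : MvPolynomial (Fin r) ℤ | ∃ s : Finset (Fin r),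
          (¬ ∃ σ ∈ Sigma, ∀ i ∈ s, v i ∈ σ) ∧ f = ∏ i ∈ s, X i })) := by
  classical
  by_cases hne : ∃ σ0, σ0 ∈ Sigma
  case neg =>
    -- degenerate case: the fan is empty, both rings are trivial
    haveI hE : IsEmpty {w : Fin d → ℝ // (∃ σ ∈ Sigma, w ∈ σ) ∧ w ∈ L} :=
      ⟨fun u => by obtain ⟨σ, hσ, -⟩ := u.2.1; exact hne ⟨σ, hσ⟩⟩
    haveI hD : Subsingleton D := b.repr.toEquiv.subsingleton
    set I : Ideal (MvPolynomial (Fin r) ℤ) :=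
      Ideal.span { f : MvPolynomial (Fin r) ℤ | ∃ s : Finset (Fin r),
        (¬ ∃ σ ∈ Sigma, ∀ i ∈ s, v i ∈ σ) ∧ f = ∏ i ∈ s, X i } with hIdef
    have h1 : (1 : MvPolynomial (Fin r) ℤ) ∈ I := by
      refine Ideal.subset_span ⟨∅, ?_, by simp⟩
      rintro ⟨σ, hσ, -⟩
      exact hne ⟨σ, hσ⟩
    have hItop : I = ⊤ := (Ideal.eq_top_iff_one I).mpr h1
    haveI hQ : Subsingleton (MvPolynomial (Fin r) ℤ ⧸ I) := by
      constructor
      intro x y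
      obtain ⟨p, rfl⟩ := Ideal.Quotient.mk_surjective x
      obtain ⟨q, rfl⟩ := Ideal.Quotient.mk_surjective y
      rw [Ideal.Quotient.eq, hItop]
      exact Submodule.mem_top
    have eq0 : (MvPolynomial (Fin r) ℤ ⧸ I) ≃ D :=
      equivOfSubsingletonOfSubsingleton (fun _ => 0) (fun _ => 0)
    have e : (MvPolynomial (Fin r) ℤ ⧸ I) ≃+* D :=
      { eq0 with
        map_mul' := fun _ _ => Subsingleton.elim _ _,
        map_add' := fun _ _ => Subsingleton.elim _ _ }
    exact ⟨⟨e, fun i => Subsingleton.elim _ _⟩, ⟨Module.Basis.empty _⟩⟩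
  case pos =>
  obtain ⟨σ0, hσ0⟩ := hne
  classical
  -- membership lemmas
  have memσ_sum : ∀ σ ∈ Sigma, ∀ (s : Finset (Fin r)) (g : Fin r → (Fin d → ℝ)),
      (∀ i ∈ s, g i ∈ σ) → (∑ i ∈ s, g i) ∈ σ := by
    intro σ hσ s g hs
    induction s using Finset.induction_on with
    | empty => simpa using h0 σ hσ
    | @insert j s' hj ih =>
      rw [Finset.sum_insert hj]
      exact hadd σ hσ _ (hs j (Finset.mem_insert_self _ _)) _
        (ih fun i hi => hs i (Finset.mem_insert_of_mem hi))
  have memσ_smul : ∀ σ ∈ Sigma, ∀ x ∈ σ, ∀ n : ℕ, (n : ℝ) • x ∈ σ := by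
    intro σ hσ x hx n
    induction n with
    | zero => simpa using h0 σ hσ
    | succ m ih =>
      have : ((m + 1 : ℕ) : ℝ) • x = (m : ℝ) • x + x := by
        push_cast; rw [add_smul, one_smul]
      rw [this]
      exact hadd σ hσ _ ih _ hx
  have memL_smul : ∀ x ∈ L, ∀ n : ℕ, (n : ℝ) • x ∈ L := by
    intro x hx n
    rw [Nat.cast_smul_eq_nsmul]
    exact nsmul_mem hx n
  have memL_sum : ∀ (s : Finset (Fin r)) (g : Fin r → (Fin d → ℝ)),
      (∀ i ∈ s, g i ∈ L) → (∑ i ∈ s, g i) ∈ L := fun s g hs => sum_mem hs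
  have face_smul : ∀ τ ∈ Sigma, ∀ σ ∈ Sigma, ∀ x ∈ σ, ∀ n : ℕ, n ≠ 0 →
      (n : ℝ) • x ∈ τ → x ∈ τ := by
    intro τ hτ σ hσ x hx n hn hmem
    obtain ⟨m, rfl⟩ := Nat.exists_eq_succ_of_ne_zero hn
    have : ((m + 1 : ℕ) : ℝ) • x = x + (m : ℝ) • x := by
      push_cast; rw [add_smul, one_smul, add_comm]
    rw [this] at hmem
    exact (hface σ hσ τ hτ x hx _ (memσ_smul σ hσ x hx m) hmem).1
  have face_sum : ∀ τ ∈ Sigma, ∀ σ ∈ Sigma, ∀ (s : Finset (Fin r)) (g : Fin r → (Fin d → ℝ)),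
      (∀ i ∈ s, g i ∈ σ) → (∑ i ∈ s, g i) ∈ τ → ∀ i ∈ s, g i ∈ τ := by
    intro τ hτ σ hσ s
    induction s using Finset.induction_on with
    | empty => intro g _ _ i hi; exact absurd hi (by simp)
    | @insert j s' hj ih =>
      intro g hs hsum i hi
      rw [Finset.sum_insert hj] at hsum
      have h2 := hface σ hσ τ hτ _ (hs j (Finset.mem_insert_self _ _)) _
        (memσ_sum σ hσ s' g fun i hi => hs i (Finset.mem_insert_of_mem hi)) hsum
      rcases Finset.mem_insert.mp hi with rfl | hi'
      · exact h2.1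
      · exact ih g (fun i hi => hs i (Finset.mem_insert_of_mem hi)) h2.2 i hi'
  -- basis multiplication lemmas
  have hcongr : ∀ (x y : Fin d → ℝ) (hx : (∃ σ ∈ Sigma, x ∈ σ) ∧ x ∈ L)
      (hy : (∃ σ ∈ Sigma, y ∈ σ) ∧ y ∈ L), x = y → b ⟨x, hx⟩ = b ⟨y, hy⟩ := by
    intro x y hx hy h; subst h; rfl
  have hmul : ∀ (σ : Set (Fin d → ℝ)) (hσ : σ ∈ Sigma) (x y : Fin d → ℝ) (hx : x ∈ σ) (hy : y ∈ σ)
      (hxL : x ∈ L) (hyL : y ∈ L),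
      b ⟨x, ⟨σ, hσ, hx⟩, hxL⟩ * b ⟨y, ⟨σ, hσ, hy⟩, hyL⟩ =
      b ⟨x + y, ⟨σ, hσ, hadd σ hσ x hx y hy⟩, L.add_mem hxL hyL⟩ := by
    intro σ hσ x y hx hy hxL hyL
    exact (hb ⟨x, ⟨σ, hσ, hx⟩, hxL⟩ ⟨y, ⟨σ, hσ, hy⟩, hyL⟩).1 ⟨σ, hσ, hx, hy⟩ _
  have hone : b ⟨0, ⟨σ0, hσ0, h0 σ0 hσ0⟩, L.zero_mem⟩ = 1 := by
    set e0 : D := b ⟨0, ⟨σ0, hσ0, h0 σ0 hσ0⟩, L.zero_mem⟩ with he0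
    have hid : ∀ u : {w : Fin d → ℝ // (∃ σ ∈ Sigma, w ∈ σ) ∧ w ∈ L}, e0 * b u = b u := by
      rintro ⟨x, ⟨σ, hσ, hx⟩, hxL⟩
      have h1 := hmul σ hσ 0 x (h0 σ hσ) hx L.zero_mem hxL
      have h2 : b ⟨(0 : Fin d → ℝ) + x, ⟨σ, hσ, hadd σ hσ 0 (h0 σ hσ) x hx⟩,
          L.add_mem L.zero_mem hxL⟩ = b ⟨x, ⟨σ, hσ, hx⟩, hxL⟩ :=
        hcongr _ _ _ _ (zero_add x)
      exact h1.trans h2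
    have hall : (LinearMap.mulLeft ℤ e0) = LinearMap.id := b.ext fun u => hid u
    have := congrArg (fun f => f (1 : D)) hall
    simpa using this
  have hpow : ∀ (σ : Set (Fin d → ℝ)) (hσ : σ ∈ Sigma) (x : Fin d → ℝ) (hx : x ∈ σ) (hxL : x ∈ L) (n : ℕ),
      b ⟨x, ⟨σ, hσ, hx⟩, hxL⟩ ^ n =
      b ⟨(n : ℝ) • x, ⟨σ, hσ, memσ_smul σ hσ x hx n⟩,
        memL_smul x hxL n⟩ := by
    intro σ hσ x hx hxL n
    induction n with
    | zero =>
      rw [pow_zero]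
      exact ((hcongr _ _ _ _ (by simp : ((0:ℕ):ℝ) • x = 0)).trans hone).symm
    | succ m ih =>
      rw [pow_succ, ih, hmul σ hσ _ _ (memσ_smul σ hσ x hx m) hx (memL_smul x hxL m) hxL]
      refine hcongr _ _ _ _ ?_
      push_cast
      rw [add_smul, one_smul]
  have hprodS : ∀ (σ : Set (Fin d → ℝ)) (hσ : σ ∈ Sigma) (s : Finset (Fin r)) (hvs : ∀ i ∈ s, v i ∈ σ)
      (a : Fin r → ℕ),
      ∏ i ∈ s, b ⟨v i, hrays i⟩ ^ a i =
      b ⟨∑ i ∈ s, (a i : ℝ) • v i,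
        ⟨σ, hσ, memσ_sum σ hσ s _ fun i hi => memσ_smul σ hσ _ (hvs i hi) _⟩,
        memL_sum s _ fun i hi => memL_smul _ (hrays i).2 _⟩ := by
    intro σ hσ s
    induction s using Finset.induction_on with
    | empty =>
      intro _ a
      refine Eq.trans (by simp) (hone.symm.trans (hcongr _ _ _ _ (by simp)))
    | @insert j s' hj ih =>
      intro hs a
      have hsj := hs j (Finset.mem_insert_self _ _)
      have hs' : ∀ i ∈ s', v i ∈ σ := fun i hi => hs i (Finset.mem_insert_of_mem hi)
      rw [Finset.prod_insert hj]
      have h1 : b ⟨v j, hrays j⟩ ^ a j =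
          b ⟨(a j : ℝ) • v j, ⟨σ, hσ, memσ_smul σ hσ _ hsj _⟩, memL_smul _ (hrays j).2 _⟩ :=
        hpow σ hσ (v j) hsj (hrays j).2 (a j)
      rw [h1, ih hs' a,
        hmul σ hσ _ _ (memσ_smul σ hσ _ hsj _)
          (memσ_sum σ hσ s' _ fun i hi => memσ_smul σ hσ _ (hs' i hi) _)
          (memL_smul _ (hrays j).2 _) (memL_sum s' _ fun i hi => memL_smul _ (hrays i).2 _)]
      exact hcongr _ _ _ _ (Finset.sum_insert (f := fun i => (a i : ℝ) • v i) hj).symm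
  -- extend from support to univ
  have hext_prod : ∀ (a : Fin r → ℕ),
      ∏ i ∈ Finset.univ.filter (fun i => a i ≠ 0), b ⟨v i, hrays i⟩ ^ a i =
      ∏ i, b ⟨v i, hrays i⟩ ^ a i := by
    intro a
    refine Finset.prod_subset (Finset.subset_univ _) ?_
    intro i _ hi
    simp only [Finset.mem_filter, Finset.mem_univ, true_and, not_not] at hi
    rw [hi, pow_zero]
  have hext_sum : ∀ (a : Fin r → ℕ),
      ∑ i ∈ Finset.univ.filter (fun i => a i ≠ 0), (a i : ℝ) • v i =
      ∑ i, (a i : ℝ) • v i := by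
    intro a
    refine Finset.sum_subset (Finset.subset_univ _) ?_
    intro i _ hi
    simp only [Finset.mem_filter, Finset.mem_univ, true_and, not_not] at hi
    rw [hi]; simp
  have hprodA : ∀ (a : Fin r → ℕ) (σ : Set (Fin d → ℝ)) (hσ : σ ∈ Sigma)
      (hgood : ∀ i, a i ≠ 0 → v i ∈ σ)
      (hm : (∃ σ ∈ Sigma, (∑ i, (a i : ℝ) • v i) ∈ σ) ∧ (∑ i, (a i : ℝ) • v i) ∈ L),
      ∏ i, b ⟨v i, hrays i⟩ ^ a i = b ⟨∑ i, (a i : ℝ) • v i, hm⟩ := by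
    intro a σ hσ hgood hm
    rw [← hext_prod a]
    rw [hprodS σ hσ _ (fun i hi => hgood i (by simpa using hi)) a]
    exact hcongr _ _ _ _ (hext_sum a)
  -- the vanishing dichotomy
  have hdisj : ∀ (s : Finset (Fin r)) (a : Fin r → ℕ), (∀ i ∈ s, a i ≠ 0) →
      (∏ i ∈ s, b ⟨v i, hrays i⟩ ^ a i = 0 ∨ ∃ σ ∈ Sigma, ∀ i ∈ s, v i ∈ σ) := by
    intro s
    induction s using Finset.induction_on with
    | empty => intro a _; exact Or.inr ⟨σ0, hσ0, by simp⟩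
    | @insert j s' hj ih =>
      intro a hne
      have haj : a j ≠ 0 := hne j (Finset.mem_insert_self _ _)
      have hne' : ∀ i ∈ s', a i ≠ 0 := fun i hi => hne i (Finset.mem_insert_of_mem hi)
      rcases ih a hne' with h₀ | ⟨σ, hσ, hsσ⟩
      · left; rw [Finset.prod_insert hj, h₀, mul_zero]
      · obtain ⟨σj, hσj, hvj⟩ := (hrays j).1
        by_cases hc : ∃ τ ∈ Sigma, ((a j : ℝ) • v j) ∈ τ ∧ (∑ i ∈ s', (a i : ℝ) • v i) ∈ τ
        · right
          obtain ⟨τ, hτ, h1, h2⟩ := hc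
          refine ⟨τ, hτ, ?_⟩
          intro i hi
          rcases Finset.mem_insert.mp hi with rfl | hi'
          · exact face_smul τ hτ σj hσj (v i) hvj (a i) haj h1
          · have h3 := face_sum τ hτ σ hσ s' (fun i => (a i : ℝ) • v i)
              (fun i hi => memσ_smul σ hσ _ (hsσ i hi) _) h2 i hi'
            exact face_smul τ hτ σ hσ (v i) (hsσ i hi') (a i) (hne' i hi') h3
        · left
          rw [Finset.prod_insert hj, hpow σj hσj (v j) hvj (hrays j).2 (a j),
            hprodS σ hσ s' hsσ a]
          exact (hb ⟨(a j : ℝ) • v j, ⟨σj, hσj, memσ_smul σj hσj _ hvj _⟩,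
              memL_smul _ (hrays j).2 _⟩
            ⟨∑ i ∈ s', (a i : ℝ) • v i, ⟨σ, hσ, memσ_sum σ hσ s' _
              fun i hi => memσ_smul σ hσ _ (hsσ i hi) _⟩,
              memL_sum s' _ fun i hi => memL_smul _ (hrays i).2 _⟩).2 hc
  have hzero : ∀ (a : Fin r → ℕ), (¬ ∃ σ ∈ Sigma, ∀ i, a i ≠ 0 → v i ∈ σ) →
      ∏ i, b ⟨v i, hrays i⟩ ^ a i = 0 := by
    intro a hbad
    rw [← hext_prod a]
    rcases hdisj (Finset.univ.filter (fun i => a i ≠ 0)) a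
        (fun i hi => (Finset.mem_filter.mp hi).2) with h | ⟨σ, hσ, hs⟩
    · exact h
    · exact absurd ⟨σ, hσ, fun i hi => hs i (by simp [hi])⟩ hbad
  -- the polynomial side
  set I : Ideal (MvPolynomial (Fin r) ℤ) :=
    Ideal.span { f : MvPolynomial (Fin r) ℤ | ∃ s : Finset (Fin r),
      (¬ ∃ σ ∈ Sigma, ∀ i ∈ s, v i ∈ σ) ∧ f = ∏ i ∈ s, X i } with hIdef
  set g : Fin r → D := fun i => b ⟨v i, hrays i⟩ with hgdef
  have f_mono : ∀ (a : Fin r →₀ ℕ) (c : ℤ),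
      aeval g (monomial a c) = c • ∏ i, g i ^ a i := by
    intro a c
    rw [aeval_monomial]
    have h1 : (a.prod fun i k => g i ^ k) = ∏ i ∈ a.support, g i ^ a i := rfl
    have h2 : ∏ i ∈ a.support, g i ^ a i = ∏ i, g i ^ a i := by
      refine Finset.prod_subset (Finset.subset_univ _) ?_
      intro i _ hi
      rw [Finsupp.notMem_support_iff.mp hi, pow_zero]
    rw [h1, h2, ← Algebra.smul_def]
  have hbadI : ∀ (a : Fin r →₀ ℕ) (c : ℤ),
      (¬ ∃ σ ∈ Sigma, ∀ i, a i ≠ 0 → v i ∈ σ) → monomial a c ∈ I := by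
    intro a c hbad
    have h1 : (∏ i ∈ a.support, (X i : MvPolynomial (Fin r) ℤ)) ∈ I := by
      refine Ideal.subset_span ⟨a.support, ?_, rfl⟩
      rintro ⟨σ, hσ, hall⟩
      exact hbad ⟨σ, hσ, fun i hi => hall i (Finsupp.mem_support_iff.mpr hi)⟩
    have h2 : (∏ i ∈ a.support, (X i : MvPolynomial (Fin r) ℤ) ^ a i) ∈ I := by
      have heq : ∏ i ∈ a.support, (X i : MvPolynomial (Fin r) ℤ) ^ a i =
          (∏ i ∈ a.support, (X i : MvPolynomial (Fin r) ℤ) ^ (a i - 1)) *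
            ∏ i ∈ a.support, (X i : MvPolynomial (Fin r) ℤ) := by
        rw [← Finset.prod_mul_distrib]
        refine Finset.prod_congr rfl fun i hi => ?_
        conv_lhs => rw [← Nat.succ_pred_eq_of_pos
          (Nat.pos_of_ne_zero (Finsupp.mem_support_iff.mp hi))]
        rw [pow_succ]
        rfl
      rw [heq]
      exact I.mul_mem_left _ h1
    rw [monomial_eq]
    exact I.mul_mem_left _ h2
  have hgen0 : ∀ p ∈ { f : MvPolynomial (Fin r) ℤ | ∃ s : Finset (Fin r),
      (¬ ∃ σ ∈ Sigma, ∀ i ∈ s, v i ∈ σ) ∧ f = ∏ i ∈ s, X i }, aeval g p = 0 := by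
    rintro p ⟨s, hbad, rfl⟩
    rw [map_prod]
    simp only [aeval_X]
    rcases hdisj s (fun _ => 1) (fun _ _ => one_ne_zero) with h | ⟨σ, hσ, hs⟩
    · simpa [hgdef, pow_one] using h
    · exact absurd ⟨σ, hσ, hs⟩ hbad
  have hker : ∀ p ∈ I, (aeval g).toRingHom p = 0 := by
    have hle : I ≤ RingHom.ker (aeval g).toRingHom :=
      Ideal.span_le.mpr fun p hp => RingHom.mem_ker.mpr (hgen0 p hp)
    exact fun p hp => RingHom.mem_ker.mp (hle hp)
  set fbar : MvPolynomial (Fin r) ℤ ⧸ I →+* D :=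
    Ideal.Quotient.lift I (aeval g).toRingHom hker with hfbar
  have hlift : ∀ p : MvPolynomial (Fin r) ℤ,
      fbar (Ideal.Quotient.mk I p) = aeval g p := fun p => Ideal.Quotient.lift_mk I _ _
  -- the canonical smooth decomposition of a lattice point
  set A : {w : Fin d → ℝ // (∃ σ ∈ Sigma, w ∈ σ) ∧ w ∈ L} → (Fin r → ℕ) :=
    fun u => (hsmooth u.1 u.2).choose with hAdef
  have hAspec : ∀ u : {w : Fin d → ℝ // (∃ σ ∈ Sigma, w ∈ σ) ∧ w ∈ L},
      (∃ σ ∈ Sigma, (u : Fin d → ℝ) ∈ σ ∧ ∀ i, A u i ≠ 0 → v i ∈ σ) ∧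
        (u : Fin d → ℝ) = ∑ i, (A u i : ℝ) • v i :=
    fun u => (hsmooth u.1 u.2).choose_spec.1
  have hAuniq : ∀ (u : {w : Fin d → ℝ // (∃ σ ∈ Sigma, w ∈ σ) ∧ w ∈ L}) (a : Fin r → ℕ),
      ((∃ σ ∈ Sigma, (u : Fin d → ℝ) ∈ σ ∧ ∀ i, a i ≠ 0 → v i ∈ σ) ∧
        (u : Fin d → ℝ) = ∑ i, (a i : ℝ) • v i) → a = A u :=
    fun u a h => (hsmooth u.1 u.2).choose_spec.2 a h
  have hfA : ∀ u : {w : Fin d → ℝ // (∃ σ ∈ Sigma, w ∈ σ) ∧ w ∈ L},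
      aeval g (monomial (Finsupp.equivFunOnFinite.symm (A u)) (1 : ℤ)) = b u := by
    intro u
    rw [f_mono, one_smul]
    obtain ⟨⟨σ, hσ, huσ, hgood⟩, hsum⟩ := hAspec u
    have hcoe : ⇑(Finsupp.equivFunOnFinite.symm (A u)) = A u := rfl
    have hm : (∃ σ ∈ Sigma, (∑ i, (A u i : ℝ) • v i) ∈ σ) ∧ (∑ i, (A u i : ℝ) • v i) ∈ L := by
      rw [← hsum]; exact u.2
    have h2 : ∏ i, g i ^ A u i = b ⟨∑ i, (A u i : ℝ) • v i, hm⟩ := hprodA (A u) σ hσ hgood hm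
    calc ∏ i, g i ^ (Finsupp.equivFunOnFinite.symm (A u)) i
        = ∏ i, g i ^ A u i := by rw [hcoe]
      _ = b ⟨∑ i, (A u i : ℝ) • v i, hm⟩ := h2
      _ = b u := hcongr _ _ _ _ hsum.symm
  set ψ : D →ₗ[ℤ] (MvPolynomial (Fin r) ℤ ⧸ I) :=
    b.constr ℕ (fun u => Ideal.Quotient.mk I
      (monomial (Finsupp.equivFunOnFinite.symm (A u)) (1 : ℤ))) with hψdef
  have hψb : ∀ u, ψ (b u) = Ideal.Quotient.mk I
      (monomial (Finsupp.equivFunOnFinite.symm (A u)) (1 : ℤ)) :=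
    fun u => b.constr_basis ℕ _ u
  have hcomp : ∀ x : D, fbar (ψ x) = x := by
    have hlin : (fbar.toIntAlgHom.toLinearMap).comp ψ = LinearMap.id := by
      refine b.ext fun u => ?_
      rw [LinearMap.comp_apply, hψb u]
      show fbar (Ideal.Quotient.mk I _) = _
      rw [hlift, hfA u]
      rfl
    intro x
    exact LinearMap.ext_iff.mp hlin x
  have hψmono : ∀ (a : Fin r →₀ ℕ) (c : ℤ),
      ψ (aeval g (monomial a c)) = Ideal.Quotient.mk I (monomial a c) := by
    intro a c
    by_cases hgd : ∃ σ ∈ Sigma, ∀ i, (a : Fin r → ℕ) i ≠ 0 → v i ∈ σ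
    · obtain ⟨σ, hσ, hgood⟩ := hgd
      have hmσ : (∑ i, ((a : Fin r → ℕ) i : ℝ) • v i) ∈ σ := by
        rw [← hext_sum ⇑a]
        exact memσ_sum σ hσ _ _ fun i hi => memσ_smul σ hσ _
          (hgood i (Finset.mem_filter.mp hi).2) _
      have hmL : (∑ i, ((a : Fin r → ℕ) i : ℝ) • v i) ∈ L :=
        memL_sum Finset.univ _ fun i _ => memL_smul _ (hrays i).2 _
      set u : {w : Fin d → ℝ // (∃ σ ∈ Sigma, w ∈ σ) ∧ w ∈ L} :=
        ⟨∑ i, ((a : Fin r → ℕ) i : ℝ) • v i, ⟨σ, hσ, hmσ⟩, hmL⟩ with hudef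
      have h1 : aeval g (monomial a c) = c • b u := by
        rw [f_mono]
        congr 1
        exact hprodA ⇑a σ hσ hgood _
      have hAu : ⇑a = A u := hAuniq u ⇑a ⟨⟨σ, hσ, hmσ, hgood⟩, rfl⟩
      have h2 : Finsupp.equivFunOnFinite.symm (A u) = a := by
        rw [← hAu]
        exact Finsupp.equivFunOnFinite_symm_coe a
      rw [h1, map_smul, hψb u, h2, ← map_zsmul (Ideal.Quotient.mk I), smul_monomial,
        smul_eq_mul, mul_one]
    · have h1 : aeval g (monomial a c) = 0 := by
        rw [f_mono, hzero ⇑a hgd, smul_zero]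
      rw [h1, map_zero]
      exact (Ideal.Quotient.eq_zero_iff_mem.mpr (hbadI a c hgd)).symm
  have hψf : ∀ p : MvPolynomial (Fin r) ℤ,
      ψ (aeval g p) = Ideal.Quotient.mk I p := by
    intro p
    conv_lhs => rw [as_sum p]
    conv_rhs => rw [as_sum p]
    rw [map_sum, map_sum, map_sum]
    exact Finset.sum_congr rfl fun a _ => hψmono a _
  have hinj : Function.Injective fbar := by
    rw [injective_iff_map_eq_zero]
    intro x hx
    obtain ⟨p, rfl⟩ := Ideal.Quotient.mk_surjective x
    rw [hlift] at hx
    have h := hψf p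
    rw [hx, map_zero] at h
    exact h.symm
  have hsurj : Function.Surjective fbar := fun x => ⟨ψ x, hcomp x⟩
  set e : (MvPolynomial (Fin r) ℤ ⧸ I) ≃+* D :=
    RingEquiv.ofBijective fbar ⟨hinj, hsurj⟩ with hedef
  refine ⟨⟨e, fun i => ?_⟩, ⟨b.map e.symm.toAddEquiv.toIntLinearEquiv⟩⟩
  show fbar (Ideal.Quotient.mk I (X i)) = b ⟨v i, hrays i⟩
  rw [hlift, aeval_X]
end

section
/- Fix nonnegative integers m_1, ..., m_n with associated partition λ_i = m_i + m_{i+1} + ... + m_n. Every n × n matrix A over C[[t]] whose determinant has t-adic valuation λ_1 + ... + λ_n, and for which for each r the (n+1−r) × (n+1−r) minors on the first n+1−r columns have minimal valuation exactly λ_r (contact order condition Cont^λ(V_•)), can be transformed by left multiplication by an element of GL_n(C[[t]]) into a unique upper-triangular matrix whose (i,i)-entry is t^{m_{n+1−i}} and whose (i,j)-entry for i < j is a polynomial in t of degree strictly less than m_{n+1−j}. -/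
open Matrix PowerSeries

/-- `λ_r = m_r + m_{r+1} + ⋯ + m_n` (0-indexed). -/
def lamOf {n : ℕ} (m : Fin n → ℕ) (r : Fin n) : ℕ :=
  ∑ i ∈ Finset.univ.filter (fun i => r ≤ i), m i

namespace S11

def Tri {n : ℕ} (B : Matrix (Fin n) (Fin n) (PowerSeries ℂ)) : Prop :=
  ∀ i j, j < i → B i j = 0

def Diag {n : ℕ} (B : Matrix (Fin n) (Fin n) (PowerSeries ℂ)) (d : Fin n → ℕ) : Prop :=
  ∀ i, B i i = X ^ d i

def Red {n : ℕ} (B : Matrix (Fin n) (Fin n) (PowerSeries ℂ)) (d : Fin n → ℕ) : Prop :=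
  ∀ i j, i < j → ∀ l, d j ≤ l → coeff l (B i j) = 0

lemma le_order_sum {ι : Type*} (s : Finset ι) (f : ι → PowerSeries ℂ) (c : ℕ∞)
    (h : ∀ i ∈ s, c ≤ order (f i)) : c ≤ order (∑ i ∈ s, f i) := by
  apply le_order
  intro l hl
  rw [map_sum]
  exact Finset.sum_eq_zero fun i hi => coeff_of_lt_order l (lt_of_lt_of_le hl (h i hi))

lemma le_order_mul_left (a f : PowerSeries ℂ) (c : ℕ∞) (h : c ≤ order f) :
    c ≤ order (a * f) :=
  le_trans (le_trans h le_add_self) (le_order_mul a f)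

lemma det_mul_expand {α : Type*} [CommRing α] {k n : ℕ} (G : Matrix (Fin k) (Fin n) α)
    (M : Matrix (Fin n) (Fin k) α) :
    (G * M).det = ∑ p : Fin k → Fin n, (∏ i, G i (p i)) * (M.submatrix p id).det := by
  have h1 : (G * M) = Matrix.of (fun i => ∑ j, G i j • M j) := by
    ext i c
    simp [Matrix.mul_apply, Finset.sum_apply]
  rw [h1]
  show (detRowAlternating : (Fin k → α) [⋀^Fin k]→ₗ[α] α).toMultilinearMap
      (fun i => ∑ j, G i j • M j) = _
  rw [MultilinearMap.map_sum]
  refine Finset.sum_congr rfl fun p _ => ?_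
  rw [MultilinearMap.map_smul_univ]
  rfl

end S11

namespace S11

lemma det_top_block {n : ℕ} (B : Matrix (Fin n) (Fin n) (PowerSeries ℂ)) (d : Fin n → ℕ)
    (h1 : Tri B) (h2 : Diag B d) {k : ℕ} (hk : k ≤ n) :
    (B.submatrix (Fin.castLE hk) (Fin.castLE hk)).det
      = X ^ (∑ i : Fin k, d (Fin.castLE hk i)) := by
  rw [Matrix.det_of_upperTriangular (by
    intro i j hij
    exact h1 _ _ (by exact_mod_cast hij))]
  rw [← Finset.prod_pow_eq_pow_sum]
  exact Finset.prod_congr rfl fun i _ => h2 _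

lemma tri_minor_ge {n : ℕ} (B : Matrix (Fin n) (Fin n) (PowerSeries ℂ)) (d : Fin n → ℕ)
    (h1 : Tri B) (h2 : Diag B d) {k : ℕ} (hk : k ≤ n) (p : Fin k → Fin n) :
    ((∑ i : Fin k, d (Fin.castLE hk i) : ℕ) : ℕ∞) ≤ order (B.submatrix p (Fin.castLE hk)).det := by
  by_cases hp : ∀ i, (p i).val < k
  · by_cases hinj : Function.Injective p
    · have hinj' : Function.Injective (fun i => (⟨(p i).val, hp i⟩ : Fin k)) := by
        intro a b hab
        simp only [Fin.mk.injEq] at hab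
        exact hinj (Fin.ext hab)
      have hbij := Finite.injective_iff_bijective.mp hinj'
      set σ : Equiv.Perm (Fin k) := Equiv.ofBijective _ hbij with hσ
      have hsub : B.submatrix p (Fin.castLE hk)
          = (B.submatrix (Fin.castLE hk) (Fin.castLE hk)).submatrix σ id := by
        ext i j
        simp only [Matrix.submatrix_apply, id]
        congr 1
      rw [hsub, Matrix.det_permute, det_top_block B d h1 h2 hk]
      exact le_order_mul_left _ _ _ (le_of_eq (order_X_pow _).symm)
    · obtain ⟨a, b, hab, hne⟩ := Function.not_injective_iff.mp hinj
      rw [Matrix.det_zero_of_row_eq hne (by ext j; simp [hab])]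
      simp [order_zero]
  · push_neg at hp
    obtain ⟨i, hi⟩ := hp
    rw [Matrix.det_eq_zero_of_row_eq_zero i (fun j => h1 _ _ (by
      simp only [Fin.lt_def, Fin.coe_castLE]
      exact lt_of_lt_of_le j.isLt hi))]
    simp [order_zero]

lemma tri_minor_eq {n : ℕ} (B : Matrix (Fin n) (Fin n) (PowerSeries ℂ)) (d : Fin n → ℕ)
    (h1 : Tri B) (h2 : Diag B d) {k : ℕ} (hk : k ≤ n) :
    order (B.submatrix (Fin.castLE hk) (Fin.castLE hk)).det
      = ((∑ i : Fin k, d (Fin.castLE hk i) : ℕ) : ℕ∞) := by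
  rw [det_top_block B d h1 h2 hk, order_X_pow]

end S11

namespace S11

lemma unique_aux {n : ℕ} (d : Fin n → ℕ) (B B' : Matrix (Fin n) (Fin n) (PowerSeries ℂ))
    (g : GL (Fin n) (PowerSeries ℂ)) (hg : (g : Matrix (Fin n) (Fin n) (PowerSeries ℂ)) * B = B')
    (hB1 : Tri B) (hB2 : Diag B d) (hB3 : Red B d)
    (hB1' : Tri B') (hB2' : Diag B' d) (hB3' : Red B' d) : B' = B := by
  set G : Matrix (Fin n) (Fin n) (PowerSeries ℂ) := (g : Matrix (Fin n) (Fin n) (PowerSeries ℂ))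
    with hG
  have hXe : ∀ e : ℕ, (X : PowerSeries ℂ) ^ e ≠ 0 := fun e => pow_ne_zero e X_ne_zero
  have claim1 : ∀ (jv : ℕ) (j i : Fin n), j.val = jv → j < i → G i j = 0 := by
    intro jv
    induction jv using Nat.strong_induction_on with
    | _ jv IH =>
      intro j i hjv hji
      have h0 : (G * B) i j = 0 := by rw [hg]; exact hB1' i j hji
      rw [Matrix.mul_apply] at h0
      rw [Finset.sum_eq_single j (fun k _ hkj => ?_) (by simp)] at h0
      · rw [hB2 j] at h0
        exact (mul_eq_zero.mp h0).resolve_right (hXe _)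
      · rcases lt_or_gt_of_ne hkj with hlt | hgt
        · rw [IH k.val (hjv ▸ hlt) k i rfl (hlt.trans hji), zero_mul]
        · rw [hB1 k j hgt, mul_zero]
  have claim2 : ∀ i, G i i = 1 := by
    intro i
    have h0 : (G * B) i i = X ^ d i := by rw [hg]; exact hB2' i
    rw [Matrix.mul_apply] at h0
    rw [Finset.sum_eq_single i (fun k _ hki => ?_) (by simp)] at h0
    · rw [hB2 i] at h0
      have := mul_right_cancel₀ (hXe (d i)) (h0.trans (one_mul _).symm)
      exact this
    · rcases lt_or_gt_of_ne hki with hlt | hgt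
      · rw [claim1 k.val k i rfl hlt, zero_mul]
      · rw [hB1 k i hgt, mul_zero]
  have claim3 : ∀ (jv : ℕ) (j i : Fin n), j.val = jv → i < j → G i j = 0 ∧ B' i j = B i j := by
    intro jv
    induction jv using Nat.strong_induction_on with
    | _ jv IH =>
      intro j i hjv hij
      have h0 : (G * B) i j = B' i j := by rw [hg]
      rw [Matrix.mul_apply] at h0
      have hij' : i ≠ j := ne_of_lt hij
      have hsplit : ∑ k, G i k * B k j = ∑ k ∈ ({i, j} : Finset (Fin n)), G i k * B k j := by
        symm
        apply Finset.sum_subset (Finset.subset_univ _)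
        intro k _ hk
        simp only [Finset.mem_insert, Finset.mem_singleton, not_or] at hk
        obtain ⟨hki, hkj⟩ := hk
        rcases lt_or_gt_of_ne hkj with hlt | hgt
        · rcases lt_trichotomy k i with hlt2 | heq2 | hgt2
          · rw [claim1 k.val k i rfl hlt2, zero_mul]
          · exact absurd heq2 hki
          · rw [(IH k.val (hjv ▸ hlt) k i rfl hgt2).1, zero_mul]
        · rw [hB1 k j hgt, mul_zero]
      rw [hsplit, Finset.sum_pair hij', claim2 i, one_mul, hB2 j] at h0
      have hz : G i j * X ^ d j = 0 := by
        apply PowerSeries.ext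
        intro l
        rcases le_or_gt (d j) l with hl | hl
        · have : coeff l (B i j + G i j * X ^ d j) = coeff l (B' i j) := by rw [h0]
          rw [map_add, hB3 i j hij l hl, hB3' i j hij l hl, zero_add] at this
          simpa using this
        · rw [coeff_mul_X_pow', if_neg (not_le.mpr hl), map_zero]
      constructor
      · exact (mul_eq_zero.mp hz).resolve_right (hXe _)
      · rw [← h0, hz, add_zero]
  refine Matrix.ext fun i j => ?_
  rcases lt_trichotomy i j with h | h | h
  · exact (claim3 j.val j i rfl h).2
  · rw [h, hB2 j, hB2' j]
  · rw [hB1 i j h, hB1' i j h]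

end S11

namespace S11

lemma reduce {n : ℕ} (B : Matrix (Fin n) (Fin n) (PowerSeries ℂ)) (d : Fin n → ℕ)
    (h1 : Tri B) (h2 : Diag B d) :
    ∃ g : GL (Fin n) (PowerSeries ℂ),
      Tri ((g : Matrix (Fin n) (Fin n) (PowerSeries ℂ)) * B) ∧
      Diag ((g : Matrix (Fin n) (Fin n) (PowerSeries ℂ)) * B) d ∧
      Red ((g : Matrix (Fin n) (Fin n) (PowerSeries ℂ)) * B) d := by
  suffices h : ∀ K : ℕ, ∃ g : GL (Fin n) (PowerSeries ℂ),
      Tri ((g : Matrix (Fin n) (Fin n) (PowerSeries ℂ)) * B) ∧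
      Diag ((g : Matrix (Fin n) (Fin n) (PowerSeries ℂ)) * B) d ∧
      (∀ i j : Fin n, i < j → j.val < K → ∀ l, d j ≤ l →
        coeff l (((g : Matrix (Fin n) (Fin n) (PowerSeries ℂ)) * B) i j) = 0) by
    obtain ⟨g, hg1, hg2, hg3⟩ := h n
    exact ⟨g, hg1, hg2, fun i j hij l hl => hg3 i j hij j.isLt l hl⟩
  intro K
  induction K with
  | zero =>
    refine ⟨1, ?_, ?_, fun i j _ hj => absurd hj (Nat.not_lt_zero _)⟩ <;>
      simp only [Units.val_one, Matrix.one_mul] <;> assumption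
  | succ K IH =>
    obtain ⟨g, hg1, hg2, hg3⟩ := IH
    by_cases hK : K < n
    · set Kf : Fin n := ⟨K, hK⟩ with hKf
      set B1 : Matrix (Fin n) (Fin n) (PowerSeries ℂ) :=
        (g : Matrix (Fin n) (Fin n) (PowerSeries ℂ)) * B with hB1
      set q : Fin n → PowerSeries ℂ :=
        fun i => PowerSeries.mk fun l => coeff (l + d Kf) (B1 i Kf) with hq
      set T : Matrix (Fin n) (Fin n) (PowerSeries ℂ) :=
        Matrix.of fun i j =>
          (if i = j then 1 else 0) + (if j = Kf ∧ i < Kf then -(q i) else 0) with hT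
      have hTtri : T.BlockTriangular id := by
        intro i j hij
        have h1' : i ≠ j := by intro h; rw [h] at hij; exact lt_irrefl _ hij
        have h2' : ¬(j = Kf ∧ i < Kf) := by
          rintro ⟨he, hiK⟩
          rw [he] at hij
          exact absurd ((hij : Kf < i).trans hiK) (lt_irrefl _)
        simp [hT, h1', h2']
      have hdet : T.det = 1 := by
        rw [Matrix.det_of_upperTriangular hTtri]
        apply Finset.prod_eq_one
        intro i _
        have hfalse : (i = Kf ∧ i < Kf) = False := by
          simp only [eq_iff_iff, iff_false]
          rintro ⟨he, hiK⟩
          rw [he] at hiK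
          exact absurd hiK (lt_irrefl _)
        simp [hT, hfalse]
      have hTu : IsUnit T := (Matrix.isUnit_iff_isUnit_det T).mpr (hdet ▸ isUnit_one)
      have key : ((hTu.unit * g : GL (Fin n) (PowerSeries ℂ)) :
          Matrix (Fin n) (Fin n) (PowerSeries ℂ)) * B = T * B1 := by
        rw [Units.val_mul, IsUnit.unit_spec, Matrix.mul_assoc, ← hB1]
      have hmul : ∀ i j, (T * B1) i j
          = B1 i j + (if i < Kf then -(q i) * B1 Kf j else 0) := by
        intro i j
        rw [Matrix.mul_apply]
        have hterm : ∀ k, T i k * B1 k j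
            = (if i = k then B1 k j else 0) + (if k = Kf ∧ i < Kf then -(q i) * B1 k j else 0) := by
          intro k
          by_cases e1 : i = k <;> by_cases e2 : k = Kf ∧ i < Kf <;>
            simp [hT, e1, e2, add_mul]
        simp_rw [hterm]
        rw [Finset.sum_add_distrib, Finset.sum_ite_eq Finset.univ i, if_pos (Finset.mem_univ i)]
        congr 1
        by_cases hiK : i < Kf
        · rw [if_pos hiK]
          simp only [hiK, and_true]
          rw [Finset.sum_ite_eq' Finset.univ Kf (fun k => -(q i) * B1 k j),
            if_pos (Finset.mem_univ Kf)]
        · rw [if_neg hiK]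
          simp [hiK]
      refine ⟨hTu.unit * g, ?_, ?_, ?_⟩
      · intro i j hji
        rw [key, hmul i j, hg1 i j hji]
        by_cases hiK : i < Kf
        · rw [if_pos hiK, hg1 Kf j (hji.trans hiK)]; ring
        · rw [if_neg hiK]; ring
      · intro i
        rw [key, hmul i i]
        by_cases hiK : i < Kf
        · rw [if_pos hiK, hg1 Kf i hiK]
          rw [mul_zero, add_zero]; exact hg2 i
        · rw [if_neg hiK, add_zero]; exact hg2 i
      · intro i j hij hjK l hl
        rw [key, hmul i j]
        rcases Nat.lt_succ_iff_lt_or_eq.mp hjK with hjK' | hjK'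
        · have hjKf : j < Kf := hjK'
          have : B1 Kf j = 0 := hg1 Kf j hjKf
          rw [this]
          simp only [mul_zero, ite_self, add_zero]
          exact hg3 i j hij hjK' l hl
        · have hjKf : j = Kf := Fin.ext hjK'
          rw [hjKf] at hij hl ⊢
          rw [if_pos hij, hg2 Kf, neg_mul, map_add, map_neg, coeff_mul_X_pow', if_pos hl]
          simp only [hq, coeff_mk]
          rw [Nat.sub_add_cancel hl]
          ring
    · refine ⟨g, hg1, hg2, fun i j hij _ l hl =>
        hg3 i j hij (lt_of_lt_of_le j.isLt (not_lt.mp hK)) l hl⟩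

end S11

namespace S11

lemma hermite : ∀ (n : ℕ) (A : Matrix (Fin n) (Fin n) (PowerSeries ℂ)), A.det ≠ 0 →
    ∃ (g : GL (Fin n) (PowerSeries ℂ)) (d : Fin n → ℕ),
      Tri ((g : Matrix (Fin n) (Fin n) (PowerSeries ℂ)) * A) ∧
      Diag ((g : Matrix (Fin n) (Fin n) (PowerSeries ℂ)) * A) d := by
  intro n
  induction n with
  | zero =>
    intro A _
    exact ⟨1, Fin.elim0, fun i => i.elim0, fun i => i.elim0⟩
  | succ n IH =>
    intro A hdet
    have hcol : ∃ i, A i 0 ≠ 0 := by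
      by_contra hcon
      push_neg at hcon
      exact hdet (Matrix.det_eq_zero_of_column_eq_zero 0 hcon)
    obtain ⟨iw, hiw⟩ := hcol
    obtain ⟨i0, -, hi0⟩ := Finset.exists_min_image Finset.univ
      (fun i => order (A i 0)) ⟨iw, Finset.mem_univ iw⟩
    have hi0ne : A i0 0 ≠ 0 := by
      intro hz
      have h1 := hi0 iw (Finset.mem_univ iw)
      rw [hz, order_zero] at h1
      exact hiw (order_eq_top.mp (top_unique h1))
    set v : ℕ := (order (A i0 0)).toNat with hv
    have hvord : order (A i0 0) = (v : ℕ∞) :=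
      (ENat.coe_toNat (by rwa [ne_eq, order_eq_top])).symm
    have hdvd : ∀ i, ∃ ci, A i 0 = X ^ v * ci := by
      intro i
      have hX : (X : PowerSeries ℂ) ^ v ∣ A i 0 := by
        rw [X_pow_dvd_iff]
        intro mm hm
        apply coeff_of_lt_order
        calc (mm : ℕ∞) < (v : ℕ∞) := by exact_mod_cast hm
          _ = order (A i0 0) := hvord.symm
          _ ≤ order (A i 0) := hi0 i (Finset.mem_univ i)
      obtain ⟨ci, hci⟩ := hX
      exact ⟨ci, hci⟩
    choose c hc using hdvd
    have hcoeffv : constantCoeff (c i0) ≠ 0 := by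
      have h1 := (order_eq_nat.mp hvord).1
      rw [hc i0, coeff_X_pow_mul', if_pos le_rfl, Nat.sub_self,
        coeff_zero_eq_constantCoeff] at h1
      exact h1
    have hcu : IsUnit (c i0) := isUnit_iff_constantCoeff.mpr (isUnit_iff_ne_zero.mpr hcoeffv)
    set U := hcu.unit with hU
    have hUc : (U : PowerSeries ℂ) = c i0 := hcu.unit_spec
    set π : Equiv.Perm (Fin (n+1)) := Equiv.swap 0 i0 with hπ
    set A1 := A.submatrix π id with hA1
    have hA1c : ∀ i, A1 i 0 = X ^ v * c (π i) := fun i => hc (π i)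
    set uinv : PowerSeries ℂ := ((U⁻¹ : (PowerSeries ℂ)ˣ) : PowerSeries ℂ) with huinv
    have huu : uinv * (U : PowerSeries ℂ) = 1 := U.inv_mul
    set E : Matrix (Fin (n+1)) (Fin (n+1)) (PowerSeries ℂ) := Matrix.of (fun i j =>
      if j = i then (if i = 0 then uinv else 1)
      else if j = 0 then -(c (π i)) * uinv else 0) with hE
    have hEtri : E.BlockTriangular OrderDual.toDual := by
      intro i j hij
      have h1 : j ≠ i := fun hh => by rw [hh] at hij; exact lt_irrefl _ hij
      have h2 : j ≠ 0 := by
        intro hh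
        rw [hh] at hij
        exact absurd (hij : (i : Fin (n+1)) < 0) (Fin.not_lt_zero i)
      simp [hE, h1, h2]
    have hEdet : E.det = uinv := by
      rw [Matrix.det_of_lowerTriangular E hEtri]
      have hdiag : ∀ i : Fin (n+1), E i i = if i = (0 : Fin (n+1)) then uinv else 1 :=
        fun i => by simp [hE]
      rw [Finset.prod_congr rfl (fun i _ => hdiag i), Fin.prod_univ_succ, if_pos rfl]
      have : ∀ i' : Fin n, (if (Fin.succ i') = (0 : Fin (n+1)) then uinv else 1) = 1 :=
        fun i' => if_neg (Fin.succ_ne_zero i')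
      rw [Finset.prod_congr rfl (fun i' _ => this i'), Finset.prod_const_one, mul_one]
    have hEu : IsUnit E := (Matrix.isUnit_iff_isUnit_det E).mpr
      (by rw [hEdet]; exact (U⁻¹).isUnit)
    have hEmul : ∀ (M : Matrix (Fin (n+1)) (Fin (n+1)) (PowerSeries ℂ)) i j,
        (E * M) i j = if i = 0 then uinv * M 0 j
          else M i j + -(c (π i)) * uinv * M 0 j := by
      intro M i j
      rw [Matrix.mul_apply]
      by_cases hi : i = 0
      · subst hi
        rw [if_pos rfl, Finset.sum_eq_single 0 (fun k _ hk => ?_) (by simp)]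
        · simp [hE]
        · have : E 0 k = 0 := by
            rw [hE]
            simp only [Matrix.of_apply]
            rw [if_neg hk, if_neg hk]
          rw [this, zero_mul]
      · rw [if_neg hi]
        have hsub : ∑ k, E i k * M k j = ∑ k ∈ ({i, 0} : Finset (Fin (n+1))), E i k * M k j := by
          symm
          apply Finset.sum_subset (Finset.subset_univ _)
          intro k _ hk
          simp only [Finset.mem_insert, Finset.mem_singleton, not_or] at hk
          have : E i k = 0 := by
            rw [hE]
            simp only [Matrix.of_apply]
            rw [if_neg hk.1, if_neg hk.2]
          rw [this, zero_mul]
        rw [hsub, Finset.sum_pair hi]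
        have e1 : E i i = 1 := by simp [hE, hi]
        have e2 : E i 0 = -(c (π i)) * uinv := by
          have h0i : ¬((0 : Fin (n+1)) = i) := fun hh => hi hh.symm
          simp [hE, h0i]
        rw [e1, e2, one_mul]
    set A2 := E * A1 with hA2
    have hA2col : ∀ i, A2 i 0 = if i = 0 then X ^ v else 0 := by
      intro i
      rw [hA2, hEmul A1 i 0]
      by_cases hi : i = 0
      · subst hi
        rw [if_pos rfl, if_pos rfl, hA1c 0]
        have : π 0 = i0 := Equiv.swap_apply_left 0 i0
        rw [this, ← hUc]
        calc uinv * (X ^ v * (U : PowerSeries ℂ))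
            = X ^ v * (uinv * (U : PowerSeries ℂ)) := by ring
          _ = X ^ v := by rw [huu, mul_one]
      · rw [if_neg hi, if_neg hi, hA1c i, hA1c 0]
        have : π 0 = i0 := Equiv.swap_apply_left 0 i0
        rw [this, ← hUc]
        linear_combination (-(X ^ v * c (π i))) * huu
    have hdetA1 : A1.det ≠ 0 := by
      rw [hA1]
      intro hzz
      rw [Matrix.det_permute] at hzz
      rcases Int.units_eq_one_or (Equiv.Perm.sign π) with hs | hs <;>
        rw [hs] at hzz <;> simp at hzz <;> exact hdet hzz
    have hdetA2 : A2.det ≠ 0 := by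
      rw [hA2, Matrix.det_mul, hEdet]
      exact mul_ne_zero (Units.ne_zero _) hdetA1
    set C := A2.submatrix Fin.succ Fin.succ with hCdef
    have hdetexp : A2.det = X ^ v * C.det := by
      rw [Matrix.det_succ_column_zero, Finset.sum_eq_single 0 (fun k _ hk => ?_) (by simp)]
      · rw [hA2col 0, if_pos rfl]
        simp [Fin.succAbove_zero]; rfl
      · rw [hA2col k, if_neg hk]
        ring
    have hdetC : C.det ≠ 0 := by
      intro hzz
      rw [hzz, mul_zero] at hdetexp
      exact hdetA2 hdetexp
    obtain ⟨hh, d', hTriC, hDiagC⟩ := IH C hdetC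
    set hm : Matrix (Fin n) (Fin n) (PowerSeries ℂ) :=
      (hh : Matrix (Fin n) (Fin n) (PowerSeries ℂ)) with hhm
    set g3 : Matrix (Fin (n+1)) (Fin (n+1)) (PowerSeries ℂ) :=
      Matrix.of (Fin.cons (Fin.cons 1 (fun _ => 0)) (fun i' => Fin.cons 0 (hm i'))) with hg3
    have hg3det : g3.det = hm.det := by
      rw [Matrix.det_succ_column_zero, Finset.sum_eq_single 0 (fun k _ hk => ?_) (by simp)]
      · have hsub : g3.submatrix (Fin.succAbove 0) Fin.succ = hm := by
          ext i j
          simp [hg3, Fin.succAbove_zero]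
        rw [hsub]
        simp [hg3]
      · obtain ⟨k', rfl⟩ := Fin.exists_succ_eq.mpr hk
        have : g3 k'.succ 0 = 0 := by simp [hg3]
        rw [this]
        ring
    have hg3u : IsUnit g3 := (Matrix.isUnit_iff_isUnit_det g3).mpr
      (by rw [hg3det]; exact (Matrix.isUnit_iff_isUnit_det hm).mp hh.isUnit)
    set B0 := g3 * A2 with hB0
    have hB0r0 : ∀ j, B0 0 j = A2 0 j := by
      intro j
      rw [hB0, Matrix.mul_apply, Fin.sum_univ_succ]
      simp [hg3]
    have hB0succ0 : ∀ i', B0 (Fin.succ i') 0 = 0 := by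
      intro i'
      rw [hB0, Matrix.mul_apply, Fin.sum_univ_succ]
      have hz : ∀ k' : Fin n, A2 (Fin.succ k') 0 = 0 :=
        fun k' => by rw [hA2col, if_neg (Fin.succ_ne_zero k')]
      simp [hg3, hz]
    have hB0succ : ∀ i' j', B0 (Fin.succ i') (Fin.succ j') = (hm * C) i' j' := by
      intro i' j'
      rw [hB0, Matrix.mul_apply, Fin.sum_univ_succ, Matrix.mul_apply]
      simp [hg3, hCdef]
    set P := π.permMatrix (PowerSeries ℂ) with hP
    have hPdet : IsUnit P.det := by
      rw [hP, Matrix.det_permutation]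
      rcases Int.units_eq_one_or (Equiv.Perm.sign π) with hs | hs <;> rw [hs]
      · simp
      · simp only [Units.val_neg, Units.val_one, Int.cast_neg, Int.cast_one]
        exact isUnit_one.neg
    have hPu : IsUnit P := (Matrix.isUnit_iff_isUnit_det P).mpr hPdet
    have hPA : P * A = A1 := by
      rw [hP, hA1]
      exact PEquiv.toMatrix_toPEquiv_mul π A
    have hgA : ((hg3u.unit * hEu.unit * hPu.unit :
        GL (Fin (n+1)) (PowerSeries ℂ)) : Matrix (Fin (n+1)) (Fin (n+1)) (PowerSeries ℂ)) * A
        = B0 := by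
      rw [Units.val_mul, Units.val_mul, IsUnit.unit_spec, IsUnit.unit_spec, IsUnit.unit_spec,
        Matrix.mul_assoc, Matrix.mul_assoc, hPA, ← hA2, ← hB0]
    refine ⟨hg3u.unit * hEu.unit * hPu.unit, Fin.cons v d', ?_, ?_⟩
    · intro i j hji
      rw [hgA]
      rcases Fin.eq_zero_or_eq_succ i with rfl | ⟨i', rfl⟩
      · exact absurd hji (Fin.not_lt_zero j)
      · rcases Fin.eq_zero_or_eq_succ j with rfl | ⟨j', rfl⟩
        · exact hB0succ0 i'
        · rw [hB0succ i' j']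
          exact hTriC i' j' (by exact_mod_cast Fin.succ_lt_succ_iff.mp hji)
    · intro i
      rw [hgA]
      rcases Fin.eq_zero_or_eq_succ i with rfl | ⟨i', rfl⟩
      · rw [hB0r0 0, hA2col 0, if_pos rfl, Fin.cons_zero]
      · rw [hB0succ i' i', Fin.cons_succ]
        exact hDiagC i'

end S11

namespace S11

lemma hermite_reduced {n : ℕ} (A : Matrix (Fin n) (Fin n) (PowerSeries ℂ)) (hdet : A.det ≠ 0) :
    ∃ (g : GL (Fin n) (PowerSeries ℂ)) (d : Fin n → ℕ),
      Tri ((g : Matrix (Fin n) (Fin n) (PowerSeries ℂ)) * A) ∧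
      Diag ((g : Matrix (Fin n) (Fin n) (PowerSeries ℂ)) * A) d ∧
      Red ((g : Matrix (Fin n) (Fin n) (PowerSeries ℂ)) * A) d := by
  obtain ⟨g1, d, h1, h2⟩ := hermite n A hdet
  obtain ⟨g2, r1, r2, r3⟩ := reduce _ d h1 h2
  refine ⟨g2 * g1, d, ?_, ?_, ?_⟩ <;>
    rw [Units.val_mul, Matrix.mul_assoc] <;> assumption

lemma diag_eq {n : ℕ} (m : Fin n → ℕ) (A B : Matrix (Fin n) (Fin n) (PowerSeries ℂ))
    (g : GL (Fin n) (PowerSeries ℂ))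
    (hgA : (g : Matrix (Fin n) (Fin n) (PowerSeries ℂ)) * A = B)
    (d : Fin n → ℕ) (h1 : Tri B) (h2 : Diag B d)
    (hmin : ∀ r : Fin n,
      (∀ s : Fin (n - r.val) ↪ Fin n,
        ((lamOf m r : ℕ) : ℕ∞) ≤
          PowerSeries.order (A.submatrix s (Fin.castLE (Nat.sub_le n r.val))).det) ∧
      (∃ s : Fin (n - r.val) ↪ Fin n,
        PowerSeries.order (A.submatrix s (Fin.castLE (Nat.sub_le n r.val))).det
          = ((lamOf m r : ℕ) : ℕ∞))) :
    ∀ i, d i = m i.rev := by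
  have key : ∀ r : Fin n,
      (∑ i : Fin (n - r.val), d (Fin.castLE (Nat.sub_le n r.val) i)) = lamOf m r := by
    intro r
    set k := n - r.val with hkdef
    set hk : k ≤ n := Nat.sub_le n r.val with hhk
    have hBA : ∀ p : Fin k → Fin n, B.submatrix p (Fin.castLE hk)
        = ((g : Matrix (Fin n) (Fin n) (PowerSeries ℂ)).submatrix p id)
          * (A.submatrix id (Fin.castLE hk)) := by
      intro p
      rw [← hgA]
      exact Matrix.submatrix_mul _ _ p id (Fin.castLE hk) Function.bijective_id
    have hAmat : A = ((g⁻¹ : GL (Fin n) (PowerSeries ℂ)) :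
        Matrix (Fin n) (Fin n) (PowerSeries ℂ)) * B := by
      rw [← hgA]
      rw [Units.inv_mul_cancel_left]
    have hAB : ∀ p : Fin k → Fin n, A.submatrix p (Fin.castLE hk)
        = (((g⁻¹ : GL (Fin n) (PowerSeries ℂ)) :
            Matrix (Fin n) (Fin n) (PowerSeries ℂ)).submatrix p id)
          * (B.submatrix id (Fin.castLE hk)) := by
      intro p
      conv_lhs => rw [hAmat]
      exact Matrix.submatrix_mul _ _ p id (Fin.castLE hk) Function.bijective_id
    have le1 : ((lamOf m r : ℕ) : ℕ∞) ≤ ((∑ i : Fin k, d (Fin.castLE hk i) : ℕ) : ℕ∞) := by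
      rw [← tri_minor_eq B d h1 h2 hk, hBA (Fin.castLE hk), det_mul_expand]
      apply le_order_sum
      intro p _
      by_cases hp : Function.Injective p
      · exact le_order_mul_left _ _ _ ((hmin r).1 ⟨p, hp⟩)
      · obtain ⟨a, b, hab, hne⟩ := Function.not_injective_iff.mp hp
        rw [Matrix.det_zero_of_row_eq hne (by ext jj; simp [hab]), mul_zero, order_zero]
        exact le_top
    have le2 : ((∑ i : Fin k, d (Fin.castLE hk i) : ℕ) : ℕ∞) ≤ ((lamOf m r : ℕ) : ℕ∞) := by
      obtain ⟨s, hs⟩ := (hmin r).2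
      rw [← hs, hAB ⇑s, det_mul_expand]
      apply le_order_sum
      intro p _
      exact le_order_mul_left _ _ _ (tri_minor_ge B d h1 h2 hk p)
    exact_mod_cast le_antisymm le2 le1
  -- telescoping
  set W : ℕ → ℕ := fun t => ∑ i ∈ Finset.univ.filter (fun i : Fin n => t ≤ i.val), m i with hW
  have hlamW : ∀ r : Fin n, lamOf m r = W r.val := by
    intro r
    have hfe : (Finset.univ.filter (fun i : Fin n => r ≤ i))
        = (Finset.univ.filter (fun i : Fin n => (r : ℕ) ≤ i.val)) := by
      ext i
      simp only [Finset.mem_filter, Finset.mem_univ, true_and, Fin.le_def]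
    unfold lamOf
    simp only [hW, hfe]
  have hWn : W n = 0 := by
    have hemp : Finset.univ.filter (fun i : Fin n => n ≤ i.val) = ∅ :=
      Finset.filter_false_of_mem (fun i _ => Nat.not_le.mpr i.isLt)
    simp only [hW, hemp, Finset.sum_empty]
  have hWrec : ∀ t (ht : t < n), W t = m ⟨t, ht⟩ + W (t + 1) := by
    intro t ht
    have hins : Finset.univ.filter (fun i : Fin n => t ≤ i.val)
        = insert ⟨t, ht⟩ (Finset.univ.filter (fun i : Fin n => t + 1 ≤ i.val)) := by
      ext i
      simp only [Finset.mem_filter, Finset.mem_insert, Finset.mem_univ, true_and, Fin.ext_iff]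
      omega
    rw [hW]
    simp only
    rw [hins, Finset.sum_insert (by simp)]
  set SD : ℕ → ℕ := fun k => ∑ ii ∈ Finset.range k, (if h : ii < n then d ⟨ii, h⟩ else 0)
    with hSDdef
  have hSD : ∀ (k : ℕ) (hk : k ≤ n), (∑ ii : Fin k, d (Fin.castLE hk ii)) = SD k := by
    intro k hk
    rw [hSDdef]
    simp only
    rw [← Fin.sum_univ_eq_sum_range (fun t => if h : t < n then d ⟨t, h⟩ else 0) k]
    apply Finset.sum_congr rfl
    intro ii _
    rw [dif_pos (lt_of_lt_of_le ii.isLt hk)]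
    exact congrArg d (Fin.ext rfl)
  have key' : ∀ v, v < n → SD (n - v) = W v := by
    intro v hv
    have := key ⟨v, hv⟩
    rw [hSD (n - v) (Nat.sub_le n v)] at this
    rw [this, hlamW]
  intro i
  have hn1 : 1 ≤ n := Nat.one_le_iff_ne_zero.mpr (by rintro rfl; exact i.elim0)
  set v := n - 1 - i.val with hvdef
  have hvlt : v < n := by omega
  have h1' : n - v = i.val + 1 := by
    have := i.isLt
    omega
  have h2' : n - (v + 1) = i.val := by
    have := i.isLt
    omega
  have e1 : SD (i.val + 1) = W v := by rw [← h1']; exact key' v hvlt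
  have e2 : SD (i.val + 1) = SD i.val + d i := by
    rw [hSDdef]
    simp only
    rw [Finset.sum_range_succ, dif_pos i.isLt, Fin.eta]
  have e3 : SD i.val = W (v + 1) := by
    by_cases hv1 : v + 1 < n
    · rw [← h2']; exact key' (v + 1) hv1
    · have hveq : v + 1 = n := by omega
      have hi0 : i.val = 0 := by omega
      rw [hi0, hveq, hWn, hSDdef]
      simp
  have e4 : W v = m ⟨v, hvlt⟩ + W (v + 1) := hWrec v hvlt
  have : d i = m ⟨v, hvlt⟩ := by omega
  rw [this]
  congr 1
  ext
  simp only [Fin.val_rev]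
  omega

end S11


/-- fix nonnegative integers `m_1, …, m_n` with associated partition
`λ_i = m_i + ⋯ + m_n`.  Every `n × n` matrix `A` over `ℂ[[t]]` whose determinant has
`t`-adic valuation `λ_1 + ⋯ + λ_n`, and whose `(n+1−r) × (n+1−r)` minors on the first
`n+1−r` columns have minimal valuation exactly `λ_r` for each `r` (the contact order
condition `Cont^λ(V_•)`), can be transformed by left multiplication by an element of
`GL_n(ℂ[[t]])` into a unique upper-triangular matrix with `(i,i)`-entry `t^{m_{n+1−i}}`
and `(i,j)`-entry for `i < j` a polynomial in `t` of degree `< m_{n+1−j}`. -/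
theorem stmt11 (n : ℕ) (m : Fin n → ℕ) (A : Matrix (Fin n) (Fin n) (PowerSeries ℂ))
    (hdet : PowerSeries.order A.det = ((∑ r : Fin n, lamOf m r : ℕ) : ℕ∞))
    (hmin : ∀ r : Fin n,
      (∀ s : Fin (n - r.val) ↪ Fin n,
        ((lamOf m r : ℕ) : ℕ∞) ≤
          PowerSeries.order (A.submatrix s (Fin.castLE (Nat.sub_le n r.val))).det) ∧
      (∃ s : Fin (n - r.val) ↪ Fin n,
        PowerSeries.order (A.submatrix s (Fin.castLE (Nat.sub_le n r.val))).det
          = ((lamOf m r : ℕ) : ℕ∞))) :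
    ∃! B : Matrix (Fin n) (Fin n) (PowerSeries ℂ),
      ((∀ i j, j < i → B i j = 0) ∧
       (∀ i, B i i = (PowerSeries.X : PowerSeries ℂ) ^ (m i.rev)) ∧
       (∀ i j, i < j → ∀ l, m j.rev ≤ l → PowerSeries.coeff l (B i j) = 0)) ∧
      ∃ g : GL (Fin n) (PowerSeries ℂ),
        (g : Matrix (Fin n) (Fin n) (PowerSeries ℂ)) * A = B := by
  have hdetne : A.det ≠ 0 := by
    intro h
    rw [h, PowerSeries.order_zero] at hdet
    exact ENat.top_ne_coe _ hdet
  obtain ⟨g, d, h1, h2, h3⟩ := S11.hermite_reduced A hdetne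
  have hd : ∀ i, d i = m i.rev :=
    S11.diag_eq m A _ g rfl d h1 h2 hmin
  set B : Matrix (Fin n) (Fin n) (PowerSeries ℂ) :=
    (g : Matrix (Fin n) (Fin n) (PowerSeries ℂ)) * A with hB
  have h2' : ∀ i, B i i = (X : PowerSeries ℂ) ^ (m i.rev) := fun i => by
    rw [← hd i]; exact h2 i
  have h3' : ∀ i j, i < j → ∀ l, m j.rev ≤ l → coeff l (B i j) = 0 :=
    fun i j hij l hl => h3 i j hij l (by rw [hd j]; exact hl)
  refine ⟨B, ⟨⟨h1, h2', h3'⟩, ⟨g, rfl⟩⟩, ?_⟩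
  rintro B' ⟨⟨t1, t2, t3⟩, ⟨g', rfl⟩⟩
  have hBA : ((g' * g⁻¹ : GL (Fin n) (PowerSeries ℂ)) :
      Matrix (Fin n) (Fin n) (PowerSeries ℂ)) * B
      = (g' : Matrix (Fin n) (Fin n) (PowerSeries ℂ)) * A := by
    rw [Units.val_mul, Matrix.mul_assoc, hB, Units.inv_mul_cancel_left]
  exact S11.unique_aux (fun i => m i.rev) B
    ((g' : Matrix (Fin n) (Fin n) (PowerSeries ℂ)) * A) (g' * g⁻¹) hBA
    h1 h2' h3' t1 t2 t3
end
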